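/- Let n > 0 and y0 < 0. Set γ = 2(n+1)/n and C0 = ( n²·|y0| / (2(n+1)(n+2)(n+3)) )^{(n+1)/n}, and define Y(y) = C0·(y − y0)^γ for y ≥ y0. Then: (i) Y''(y) = (|y0|/(n+3))·Y(y)^{1/(n+1)} for all y > y0; (ii) the residual R(y) := Y''(y) + (1/(n+3))·y·Y(y)^{1/(n+1)} satisfies the exact identity R(y) = ((y − y0)/|y0|)·Y''(y), so in particular R(y)/Y''(y) → 0 as y → y0⁺; hence Y solves the rescaled equation Y'' = −(1/(n+3))·y·Y^{1/(n+1)} to leading order near the interface y = y0. -/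

import Mathlib

/-- Exact local behaviour of the first nonlinear eigenfunction
near the left-hand interface `y0 < 0` (case `k = 1`, `l = 0`):
with `γ = 2(n+1)/n` and `C0 = (n²|y0|/(2(n+1)(n+2)(n+3)))^{(n+1)/n}`,
the function `Y(y) = C0 (y-y0)^γ` satisfies
(i) `Y'' = (|y0|/(n+3)) Y^{1/(n+1)}` for `y > y0`,
(ii) the residual `R = Y'' + (1/(n+3)) y Y^{1/(n+1)}` equals `((y-y0)/|y0|) Y''`,
and `R/Y'' → 0` as `y → y0⁺`. -/
theorem stmt1 (n y0 : ℝ) (hn : 0 < n) (hy0 : y0 < 0) :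
    let γ : ℝ := 2 * (n + 1) / n
    let C0 : ℝ := (n ^ 2 * |y0| / (2 * (n + 1) * (n + 2) * (n + 3))) ^ ((n + 1) / n)
    let Y : ℝ → ℝ := fun y => C0 * (y - y0) ^ γ
    (∀ y : ℝ, y0 < y →
      deriv (deriv Y) y = (|y0| / (n + 3)) * Y y ^ (1 / (n + 1))) ∧
    (∀ y : ℝ, y0 < y →
      deriv (deriv Y) y + (1 / (n + 3)) * y * Y y ^ (1 / (n + 1))
        = ((y - y0) / |y0|) * deriv (deriv Y) y) ∧
    Filter.Tendsto
      (fun y : ℝ =>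
        (deriv (deriv Y) y + (1 / (n + 3)) * y * Y y ^ (1 / (n + 1)))
          / deriv (deriv Y) y)
      (nhdsWithin y0 (Set.Ioi y0)) (nhds 0) := by
  intro γ C0 Y
  have habs : |y0| = -y0 := abs_of_neg hy0
  have habs0 : (0:ℝ) < |y0| := abs_pos.mpr (ne_of_lt hy0)
  set A : ℝ := n ^ 2 * |y0| / (2 * (n + 1) * (n + 2) * (n + 3)) with hAdef
  have hA : 0 < A := by positivity
  have hC0 : 0 < C0 := Real.rpow_pos_of_pos hA _
  have hn0 : n ≠ 0 := ne_of_gt hn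
  have hn1 : (n:ℝ) + 1 ≠ 0 := by positivity
  have hγ1 : γ - 1 = (n + 2) / n := by simp only [γ]; field_simp; ring
  have hγpos : 0 < γ := by positivity
  have hγ1pos : 0 < γ - 1 := by rw [hγ1]; positivity
  -- first derivative
  have hY' : ∀ y : ℝ, y0 < y → HasDerivAt Y (C0 * γ * (y - y0) ^ (γ - 1)) y := by
    intro y hy
    have hsub : HasDerivAt (fun z : ℝ => z - y0) 1 y := by
      simpa using (hasDerivAt_id y).sub_const y0
    have h := (Real.hasDerivAt_rpow_const (x := y - y0) (p := γ)
      (Or.inl (by intro h; linarith [sub_eq_zero.mp h] : y - y0 ≠ 0))).comp y hsub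
    have h2 : HasDerivAt Y (C0 * (γ * (y - y0) ^ (γ - 1) * 1)) y := h.const_mul C0
    convert h2 using 1
    ring
  have hderivY : ∀ y : ℝ, y0 < y → deriv Y y = C0 * γ * (y - y0) ^ (γ - 1) :=
    fun y hy => (hY' y hy).deriv
  -- second derivative
  have hY'' : ∀ y : ℝ, y0 < y →
      deriv (deriv Y) y = C0 * γ * (γ - 1) * (y - y0) ^ (γ - 2) := by
    intro y hy
    have hev : deriv Y =ᶠ[nhds y] fun z => C0 * γ * (z - y0) ^ (γ - 1) := by
      filter_upwards [Ioi_mem_nhds hy] with z hz using hderivY z hz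
    rw [hev.deriv_eq]
    have hsub : HasDerivAt (fun z : ℝ => z - y0) 1 y := by
      simpa using (hasDerivAt_id y).sub_const y0
    have h := (Real.hasDerivAt_rpow_const (x := y - y0) (p := γ - 1)
      (Or.inl (by intro h; linarith [sub_eq_zero.mp h] : y - y0 ≠ 0))).comp y hsub
    have h2 : HasDerivAt (fun z : ℝ => C0 * γ * (z - y0) ^ (γ - 1))
        (C0 * γ * ((γ - 1) * (y - y0) ^ (γ - 1 - 1) * 1)) y := h.const_mul (C0 * γ)
    rw [h2.deriv]
    have he : γ - 1 - 1 = γ - 2 := by ring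
    rw [he]; ring
  -- the key pointwise algebraic identity
  have key : ∀ y : ℝ, y0 < y →
      C0 * γ * (γ - 1) * (y - y0) ^ (γ - 2)
        = (|y0| / (n + 3)) * (Y y) ^ (1 / (n + 1)) := by
    intro y hy
    have ht : (0:ℝ) < y - y0 := by linarith
    have hYy : (Y y) ^ (1 / (n + 1)) = A ^ (1 / n) * (y - y0) ^ (γ - 2) := by
      show (C0 * (y - y0) ^ γ) ^ (1 / (n + 1)) = _
      rw [Real.mul_rpow hC0.le (Real.rpow_pos_of_pos ht γ).le,
        ← Real.rpow_mul ht.le]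
      have e1 : γ * (1 / (n + 1)) = γ - 2 := by simp only [γ]; field_simp; ring
      have e2 : C0 ^ (1 / (n + 1)) = A ^ (1 / n) := by
        show (A ^ ((n + 1) / n)) ^ (1 / (n + 1)) = _
        rw [← Real.rpow_mul hA.le]
        congr 1
        field_simp
      rw [e1, e2]
    rw [hYy]
    have hC0A : C0 = A ^ (1 / n) * A := by
      show A ^ ((n + 1) / n) = _
      have : (n + 1) / n = 1 / n + 1 := by field_simp; ring
      rw [this, Real.rpow_add hA, Real.rpow_one]
    have hAγ : A * (γ * (γ - 1)) = |y0| / (n + 3) := by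
      rw [hAdef]
      show n ^ 2 * |y0| / (2 * (n + 1) * (n + 2) * (n + 3)) *
        (2 * (n + 1) / n * (2 * (n + 1) / n - 1)) = |y0| / (n + 3)
      have h2 : (n:ℝ) + 2 ≠ 0 := by positivity
      have h3 : (n:ℝ) + 3 ≠ 0 := by positivity
      field_simp
      ring
    rw [hC0A, ← hAγ]
    ring
  -- part (i)
  have part1 : ∀ y : ℝ, y0 < y →
      deriv (deriv Y) y = (|y0| / (n + 3)) * Y y ^ (1 / (n + 1)) := by
    intro y hy; rw [hY'' y hy, key y hy]
  refine ⟨part1, ?_, ?_⟩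
  · -- part (ii)
    intro y hy
    have hP := part1 y hy
    have h3 : (n:ℝ) + 3 ≠ 0 := by positivity
    have hy0ne : y0 ≠ 0 := ne_of_lt hy0
    generalize Y y ^ (1 / (n + 1)) = P at hP ⊢
    rw [hP, habs]
    field_simp
    ring
  · -- part (iii)
    have hev : (fun y : ℝ =>
        (deriv (deriv Y) y + (1 / (n + 3)) * y * Y y ^ (1 / (n + 1)))
          / deriv (deriv Y) y)
        =ᶠ[nhdsWithin y0 (Set.Ioi y0)] fun y => (y - y0) / |y0| := by
      filter_upwards [self_mem_nhdsWithin] with y hy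
      have hy' : y0 < y := hy
      have hP := part1 y hy'
      have hne : deriv (deriv Y) y ≠ 0 := by
        rw [hY'' y hy']
        have ht : (0:ℝ) < y - y0 := by linarith
        positivity
      have h2 : deriv (deriv Y) y + (1 / (n + 3)) * y * Y y ^ (1 / (n + 1))
          = ((y - y0) / |y0|) * deriv (deriv Y) y := by
        have h3 : (n:ℝ) + 3 ≠ 0 := by positivity
        have hy0ne : y0 ≠ 0 := ne_of_lt hy0
        generalize Y y ^ (1 / (n + 1)) = P at hP ⊢
        rw [hP, habs]
        field_simp
        ring
      rw [h2, mul_div_assoc, div_self hne, mul_one]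
    refine Filter.Tendsto.congr' hev.symm ?_
    have : Filter.Tendsto (fun y : ℝ => (y - y0) / |y0|) (nhds y0)
        (nhds ((y0 - y0) / |y0|)) := by
      apply Filter.Tendsto.div_const
      exact (continuous_id.sub continuous_const).tendsto y0
    simpa using this.mono_left nhdsWithin_le_nhds
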